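/- Helly's selection theorem (first part): Let {f_n} be a sequence of functions on [0, τ] such that ‖f_n‖_∞ ≤ A₁ and sup_n V(f_n) ≤ A₂ for finite constants A₁, A₂. Then there exists a subsequence {f_{n_j}} converging pointwise to some function f. -/

import Mathlib

open Filter Topology

lemma diag_subseq (M : ℝ) (e : ℕ → ℝ) (u : ℕ → ℝ → ℝ)
    (hb : ∀ n i, |u n (e i)| ≤ M) :
    ∃ φ : ℕ → ℕ, StrictMono φ ∧
      ∀ i, ∃ l, Tendsto (fun j => u (φ j) (e i)) atTop (𝓝 l) := by
  have hcpt : IsCompact (Set.pi Set.univ fun _ : ℕ => Set.Icc (-M) M) :=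
    isCompact_univ_pi fun _ => isCompact_Icc
  have hmem : ∀ n, (fun i => u n (e i)) ∈ Set.pi Set.univ fun _ : ℕ => Set.Icc (-M) M := by
    intro n i _
    exact abs_le.1 (hb n i)
  obtain ⟨a, -, φ, hφ, ha⟩ := hcpt.tendsto_subseq hmem
  exact ⟨φ, hφ, fun i => ⟨a i, tendsto_pi_nhds.1 ha i⟩⟩

/-- Helly's selection theorem for a uniformly bounded sequence of monotone functions. -/
lemma helly_mono (τ M : ℝ) (hτ : 0 ≤ τ) (p : ℕ → ℝ → ℝ)
    (hmono : ∀ n, MonotoneOn (p n) (Set.Icc 0 τ))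
    (hb : ∀ n, ∀ t ∈ Set.Icc 0 τ, |p n t| ≤ M) :
    ∃ φ : ℕ → ℕ, StrictMono φ ∧ ∀ t ∈ Set.Icc 0 τ,
      ∃ l, Tendsto (fun j => p (φ j) t) atTop (𝓝 l) := by
  classical
  set D : Set ℝ := insert 0 (insert τ {x | x ∈ Set.Icc (0:ℝ) τ ∧ ∃ q : ℚ, (q:ℝ) = x}) with hDdef
  have hDcount : D.Countable := by
    refine Set.Countable.insert _ (Set.Countable.insert _ ?_)
    exact (Set.countable_range (fun q : ℚ => (q:ℝ))).mono (fun x hx => hx.2)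
  have h0D : (0:ℝ) ∈ D := Set.mem_insert _ _
  have hτD : τ ∈ D := Set.mem_insert_iff.2 (Or.inr (Set.mem_insert _ _))
  have hDIcc : D ⊆ Set.Icc 0 τ := by
    intro x hx
    rcases hx with rfl | hx
    · exact ⟨le_rfl, hτ⟩
    rcases hx with rfl | hx
    · exact ⟨hτ, le_rfl⟩
    · exact hx.1
  obtain ⟨e, he⟩ := hDcount.exists_eq_range ⟨0, h0D⟩
  have hbe : ∀ n i, |p n (e i)| ≤ M := by
    intro n i
    exact hb n _ (hDIcc (by rw [he]; exact Set.mem_range_self i))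
  obtain ⟨φ₁, hφ₁, hconv⟩ := diag_subseq M e p hbe
  have hDconv : ∀ s ∈ D, ∃ l, Tendsto (fun j => p (φ₁ j) s) atTop (𝓝 l) := by
    intro s hs
    rw [he] at hs
    obtain ⟨i, rfl⟩ := hs
    exact hconv i
  set g0 : ℝ → ℝ := fun s =>
    if h : ∃ l, Tendsto (fun j => p (φ₁ j) s) atTop (𝓝 l) then h.choose else 0 with hg0def
  have hg0 : ∀ s ∈ D, Tendsto (fun j => p (φ₁ j) s) atTop (𝓝 (g0 s)) := by
    intro s hs
    obtain h := hDconv s hs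
    have hg : g0 s = h.choose := dif_pos h
    rw [hg]
    exact h.choose_spec
  have hg0b : ∀ s ∈ D, |g0 s| ≤ M := by
    intro s hs
    refine abs_le.2 ⟨?_, ?_⟩
    · exact ge_of_tendsto (hg0 s hs)
        (Eventually.of_forall fun j => (abs_le.1 (hb _ s (hDIcc hs))).1)
    · exact le_of_tendsto (hg0 s hs)
        (Eventually.of_forall fun j => (abs_le.1 (hb _ s (hDIcc hs))).2)
  have hg0mono : ∀ s ∈ D, ∀ s' ∈ D, s ≤ s' → g0 s ≤ g0 s' := by
    intro s hs s' hs' hss'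
    exact le_of_tendsto_of_tendsto' (hg0 s hs) (hg0 s' hs')
      fun j => hmono (φ₁ j) (hDIcc hs) (hDIcc hs') hss'
  set G : ℝ → ℝ := fun t => if t ≤ τ then sInf (g0 '' (D ∩ Set.Icc t τ)) else g0 τ with hGdef
  have hbdd : ∀ t : ℝ, BddBelow (g0 '' (D ∩ Set.Icc t τ)) := by
    intro t
    refine ⟨-M, ?_⟩
    rintro y ⟨x, ⟨hxD, -⟩, rfl⟩
    exact (abs_le.1 (hg0b x hxD)).1
  have hne : ∀ t : ℝ, t ≤ τ → τ ∈ D ∩ Set.Icc t τ := fun t ht => ⟨hτD, ht, le_rfl⟩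
  have hGD : ∀ s ∈ D, G s = g0 s := by
    intro s hs
    have hsτ : s ≤ τ := (hDIcc hs).2
    rw [hGdef]
    dsimp only
    rw [if_pos hsτ]
    apply le_antisymm
    · exact csInf_le (hbdd s) ⟨s, ⟨hs, le_rfl, hsτ⟩, rfl⟩
    · refine le_csInf ⟨_, Set.mem_image_of_mem _ (hne s hsτ)⟩ ?_
      rintro y ⟨x, ⟨hxD, hsx, -⟩, rfl⟩
      exact hg0mono s hs x hxD hsx
  have hGmono : Monotone G := by
    intro a b hab
    rw [hGdef]
    dsimp only
    by_cases hb' : b ≤ τ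
    · rw [if_pos (hab.trans hb'), if_pos hb']
      exact csInf_le_csInf (hbdd a) ⟨_, Set.mem_image_of_mem _ (hne b hb')⟩
        (Set.image_mono (Set.inter_subset_inter_right _ (Set.Icc_subset_Icc_left hab)))
    · by_cases ha' : a ≤ τ
      · rw [if_pos ha', if_neg hb']
        exact csInf_le (hbdd a) ⟨τ, hne a ha', rfl⟩
      · rw [if_neg ha', if_neg hb']
  have key : ∀ t ∈ Set.Icc 0 τ, t ∉ D → ContinuousAt G t →
      Tendsto (fun j => p (φ₁ j) t) atTop (𝓝 (G t)) := by
    intro t ht htD hcont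
    have h0t : 0 < t := ht.1.lt_of_ne fun h => htD (by rw [← h]; exact h0D)
    have htτ : t < τ := ht.2.lt_of_ne fun h => htD (by rw [h]; exact hτD)
    rw [Metric.tendsto_atTop]
    intro ε hε
    obtain ⟨δ, hδpos, hδ⟩ := Metric.continuousAt_iff.1 hcont (ε/2) (by positivity)
    obtain ⟨q1, hq1a, hq1b⟩ := exists_rat_btwn
      (show max 0 (t - δ/2) < t from max_lt h0t (by linarith))
    obtain ⟨q2, hq2a, hq2b⟩ := exists_rat_btwn
      (show t < min τ (t + δ/2) from lt_min htτ (by linarith))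
    have hq1a' : t - δ/2 < (q1:ℝ) := lt_of_le_of_lt (le_max_right _ _) hq1a
    have hq1a0 : (0:ℝ) < q1 := lt_of_le_of_lt (le_max_left _ _) hq1a
    have hq2b' : (q2:ℝ) < t + δ/2 := lt_of_lt_of_le hq2b (min_le_right _ _)
    have hq2bτ : (q2:ℝ) < τ := lt_of_lt_of_le hq2b (min_le_left _ _)
    have hq1Icc : (q1:ℝ) ∈ Set.Icc 0 τ := ⟨hq1a0.le, (hq1b.trans htτ).le⟩
    have hq2Icc : (q2:ℝ) ∈ Set.Icc 0 τ := ⟨(h0t.trans hq2a).le, hq2bτ.le⟩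
    have hq1D : (q1:ℝ) ∈ D :=
      Set.mem_insert_iff.2 (Or.inr (Set.mem_insert_iff.2 (Or.inr ⟨hq1Icc, q1, rfl⟩)))
    have hq2D : (q2:ℝ) ∈ D :=
      Set.mem_insert_iff.2 (Or.inr (Set.mem_insert_iff.2 (Or.inr ⟨hq2Icc, q2, rfl⟩)))
    have hd1 : |G q1 - G t| < ε/2 := by
      have hdist : dist (q1:ℝ) t < δ := by
        rw [Real.dist_eq, abs_lt]
        constructor <;> linarith
      have := hδ hdist
      rwa [Real.dist_eq] at this
    have hd2 : |G q2 - G t| < ε/2 := by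
      have hdist : dist (q2:ℝ) t < δ := by
        rw [Real.dist_eq, abs_lt]
        constructor <;> linarith
      have := hδ hdist
      rwa [Real.dist_eq] at this
    have e1 := hg0 _ hq1D
    have e2 := hg0 _ hq2D
    rw [Metric.tendsto_atTop] at e1 e2
    obtain ⟨N1, hN1⟩ := e1 (ε/2) (by positivity)
    obtain ⟨N2, hN2⟩ := e2 (ε/2) (by positivity)
    refine ⟨max N1 N2, fun j hj => ?_⟩
    have hj1 := hN1 j (le_trans (le_max_left _ _) hj)
    have hj2 := hN2 j (le_trans (le_max_right _ _) hj)
    rw [Real.dist_eq, abs_lt] at hj1 hj2 ⊢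
    rw [abs_lt] at hd1 hd2
    have hm1 : p (φ₁ j) q1 ≤ p (φ₁ j) t := hmono _ hq1Icc ht hq1b.le
    have hm2 : p (φ₁ j) t ≤ p (φ₁ j) q2 := hmono _ ht hq2Icc hq2a.le
    rw [hGD _ hq1D] at hd1
    rw [hGD _ hq2D] at hd2
    constructor <;> linarith
  set B : Set ℝ := insert 0 {t | ¬ ContinuousAt G t} with hBdef
  have hBcount : B.Countable := (hGmono.countable_not_continuousAt).insert 0
  obtain ⟨e', he'⟩ := hBcount.exists_eq_range ⟨0, Set.mem_insert 0 _⟩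
  set u' : ℕ → ℝ → ℝ := fun n t => p (φ₁ n) (max 0 (min τ t)) with hu'def
  have hbu' : ∀ n i, |u' n (e' i)| ≤ M := fun n i =>
    hb _ _ ⟨le_max_left _ _, max_le hτ (min_le_left _ _)⟩
  obtain ⟨φ₂, hφ₂, hconv₂⟩ := diag_subseq M e' u' hbu'
  refine ⟨φ₁ ∘ φ₂, hφ₁.comp hφ₂, ?_⟩
  intro t ht
  by_cases htB : t ∈ B
  · rw [he'] at htB
    obtain ⟨i, rfl⟩ := htB
    obtain ⟨l, hl⟩ := hconv₂ i
    refine ⟨l, ?_⟩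
    have hclamp : max 0 (min τ (e' i)) = e' i := by
      rw [min_eq_right ht.2, max_eq_right ht.1]
    simpa [hu'def, hclamp] using hl
  · have hcontG : ContinuousAt G t := by
      by_contra h
      exact htB (Set.mem_insert_iff.2 (Or.inr h))
    have htend : Tendsto (fun j => p (φ₁ j) t) atTop (𝓝 (G t)) := by
      by_cases htD : t ∈ D
      · rw [hGD t htD]
        exact hg0 t htD
      · exact key t ht htD hcontG
    exact ⟨G t, htend.comp hφ₂.tendsto_atTop⟩

/-- Helly's selection theorem (first part): a sequence of functions on `[0, τ]`
that is uniformly bounded by `A₁` and of uniformly bounded total variation `A₂`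
admits a subsequence converging pointwise on `[0, τ]` to some function `f`. -/
theorem stmt_1 (τ A₁ A₂ : ℝ) (f : ℕ → ℝ → ℝ)
    (hbdd : ∀ n, ∀ t ∈ Set.Icc 0 τ, |f n t| ≤ A₁)
    (hvar : ∀ n, eVariationOn (f n) (Set.Icc 0 τ) ≤ ENNReal.ofReal A₂) :
    ∃ φ : ℕ → ℕ, StrictMono φ ∧ ∃ g : ℝ → ℝ,
      ∀ t ∈ Set.Icc 0 τ,
        Filter.Tendsto (fun j => f (φ j) t) Filter.atTop (nhds (g t)) := by
  classical
  by_cases hτ : 0 ≤ τ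
  · have h0 : (0:ℝ) ∈ Set.Icc 0 τ := ⟨le_rfl, hτ⟩
    have hvar' : ∀ n, eVariationOn (f n) (Set.Icc 0 τ) ≠ ⊤ := fun n =>
      ne_top_of_le_ne_top ENNReal.ofReal_ne_top (hvar n)
    have hlbv : ∀ n, LocallyBoundedVariationOn (f n) (Set.Icc 0 τ) := by
      intro n a b _ _
      exact ne_top_of_le_ne_top (hvar' n) (eVariationOn.mono _ Set.inter_subset_left)
    set p : ℕ → ℝ → ℝ := fun n => variationOnFromTo (f n) (Set.Icc 0 τ) 0 with hpdef
    set q : ℕ → ℝ → ℝ := fun n t => p n t - f n t with hqdef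
    have hpmono : ∀ n, MonotoneOn (p n) (Set.Icc 0 τ) := fun n =>
      variationOnFromTo.monotoneOn (hlbv n) h0
    have hqmono : ∀ n, MonotoneOn (q n) (Set.Icc 0 τ) := fun n =>
      variationOnFromTo.sub_self_monotoneOn (hlbv n) h0
    have hpb : ∀ n, ∀ t ∈ Set.Icc 0 τ, |p n t| ≤ |A₂| := by
      intro n t ht
      have h1 : 0 ≤ p n t := variationOnFromTo.nonneg_of_le _ _ ht.1
      have h2 : p n t ≤ (eVariationOn (f n) (Set.Icc 0 τ)).toReal := by
        rw [hpdef]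
        dsimp only
        rw [variationOnFromTo.eq_of_le _ _ ht.1]
        exact ENNReal.toReal_mono (hvar' n) (eVariationOn.mono _ Set.inter_subset_left)
      have h3 : (eVariationOn (f n) (Set.Icc 0 τ)).toReal ≤ |A₂| := by
        have : eVariationOn (f n) (Set.Icc 0 τ) ≤ ENNReal.ofReal |A₂| :=
          le_trans (hvar n) (ENNReal.ofReal_le_ofReal (le_abs_self _))
        calc (eVariationOn (f n) (Set.Icc 0 τ)).toReal
            ≤ (ENNReal.ofReal |A₂|).toReal := ENNReal.toReal_mono ENNReal.ofReal_ne_top this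
          _ = |A₂| := ENNReal.toReal_ofReal (abs_nonneg _)
      rw [abs_of_nonneg h1]
      linarith
    have hqb : ∀ n, ∀ t ∈ Set.Icc 0 τ, |q n t| ≤ |A₁| + |A₂| := by
      intro n t ht
      have h1 := abs_le.1 (hpb n t ht)
      have h2 := abs_le.1 (hbdd n t ht)
      have h3 : A₁ ≤ |A₁| := le_abs_self _
      rw [hqdef]
      dsimp only
      rw [abs_le]
      constructor <;> linarith
    obtain ⟨φa, hφa, hpa⟩ := helly_mono τ (|A₁| + |A₂|) hτ p hpmono
      (fun n t ht => (hpb n t ht).trans (le_add_of_nonneg_left (abs_nonneg _)))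
    obtain ⟨φb, hφb, hqb'⟩ := helly_mono τ (|A₁| + |A₂|) hτ (fun n => q (φa n))
      (fun n => hqmono (φa n)) (fun n => hqb (φa n))
    refine ⟨φa ∘ φb, hφa.comp hφb, ?_⟩
    set g : ℝ → ℝ := fun t =>
      (if hp' : ∃ l, Tendsto (fun j => p (φa j) t) atTop (𝓝 l) then hp'.choose else 0) -
      (if hq' : ∃ l, Tendsto (fun j => q (φa (φb j)) t) atTop (𝓝 l) then hq'.choose else 0)
      with hgdef
    refine ⟨g, fun t ht => ?_⟩
    obtain hp' := hpa t ht
    obtain hq' := hqb' t ht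
    have hg : g t = hp'.choose - hq'.choose := by
      rw [hgdef]
      dsimp only
      rw [dif_pos hp', dif_pos hq']
    have h1 : Tendsto (fun j => p (φa (φb j)) t) atTop (𝓝 hp'.choose) :=
      hp'.choose_spec.comp hφb.tendsto_atTop
    have h2 : Tendsto (fun j => q (φa (φb j)) t) atTop (𝓝 hq'.choose) := hq'.choose_spec
    have h3 := h1.sub h2
    rw [hg]
    have h4 : (fun j => p (φa (φb j)) t - q (φa (φb j)) t)
        = fun j => f ((φa ∘ φb) j) t := by
      funext j
      simp only [hqdef, Function.comp_apply]
      ring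
    rw [← h4]
    exact h3
  · exact ⟨id, strictMono_id, fun _ => 0, fun t ht => absurd (ht.1.trans ht.2) hτ⟩
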